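/- Let σ ∈ (0,2), Λ ≥ 1, and let ν be a Borel measure on ℝ^d with ν(B_r^c) ≤ Λ r^{-σ} for all r > 0. Define μ(dy) = ν(dy) + |y|^{-d-σ} dy. Then for every r > 0 and every ξ ∈ ℝ^d, (1/μ(B_r^c)) · |∫_{|y| > r} (1 − e^{i ξ·y}) dμ(y)| ≤ N r^{σ/2} |ξ|^{σ/2}, where N = N(d, σ, Λ). -/

import Mathlib

open MeasureTheory Metric Set
open scoped InnerProductSpace ENNReal

noncomputable section

namespace Stmt5Aux

lemma exp_bound {σ : ℝ} (hσ0 : 0 < σ) (hσ2 : σ < 2) (θ : ℝ) :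
    ‖1 - Complex.exp (Complex.I * θ)‖ ≤ 2 * |θ| ^ (σ / 2) := by
  rcases le_or_gt |θ| 1 with h | h
  · rcases eq_or_ne θ 0 with rfl | hθ
    · simp
      positivity
    have h1 : ‖1 - Complex.exp (Complex.I * θ)‖ ≤ 2 * |θ| := by
      calc ‖1 - Complex.exp (Complex.I * θ)‖
          = ‖Complex.exp (Complex.I * θ) - 1‖ := by
            rw [norm_sub_rev]
        _ ≤ 2 * ‖Complex.I * θ‖ :=
            Complex.norm_exp_sub_one_le (by simpa using h)
        _ = 2 * |θ| := by simp
    refine h1.trans ?_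
    have h2 : |θ| ≤ |θ| ^ (σ / 2) := by
      calc |θ| = |θ| ^ (1 : ℝ) := (Real.rpow_one _).symm
        _ ≤ |θ| ^ (σ / 2) :=
          Real.rpow_le_rpow_of_exponent_ge (abs_pos.mpr hθ) h (by linarith)
    linarith
  · have h2 : ‖1 - Complex.exp (Complex.I * θ)‖ ≤ 2 := by
      calc ‖1 - Complex.exp (Complex.I * θ)‖
          ≤ ‖(1 : ℂ)‖ + ‖Complex.exp (Complex.I * θ)‖ := norm_sub_le _ _
        _ = 2 := by
            rw [norm_one, Complex.norm_exp]
            simp [Complex.mul_re]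
            norm_num
    refine h2.trans ?_
    have h3 : (1 : ℝ) ≤ |θ| ^ (σ / 2) := by
      calc (1 : ℝ) = (1 : ℝ) ^ (σ / 2) := (Real.one_rpow _).symm
        _ ≤ |θ| ^ (σ / 2) := Real.rpow_le_rpow zero_le_one h.le (by linarith)
    linarith

variable {E : Type*} [NormedAddCommGroup E] [MeasurableSpace E]

omit [MeasurableSpace E] in
lemma cover {r : ℝ} (hr : 0 < r) :
    {y : E | r < ‖y‖} ⊆ ⋃ n : ℕ, {y : E | r * 2 ^ n < ‖y‖ ∧ ‖y‖ ≤ r * 2 ^ (n + 1)} := by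
  intro y hy
  simp only [mem_setOf_eq] at hy
  have hex : ∃ n : ℕ, ‖y‖ ≤ r * 2 ^ (n + 1) := by
    obtain ⟨n, hn⟩ := pow_unbounded_of_one_lt (‖y‖ / r) (one_lt_two (α := ℝ))
    rw [div_lt_iff₀ hr] at hn
    have h21 : (2 : ℝ) ^ n ≤ 2 ^ (n + 1) := pow_le_pow_right₀ one_le_two (Nat.le_succ n)
    exact ⟨n, by nlinarith⟩
  classical
  refine mem_iUnion.2 ⟨Nat.find hex, ?_, Nat.find_spec hex⟩
  rcases Nat.eq_zero_or_pos (Nat.find hex) with h0 | h0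
  · rw [h0]; simpa using hy
  · obtain ⟨k, hk⟩ := Nat.exists_eq_succ_of_ne_zero h0.ne'
    rw [hk]
    have := Nat.find_min hex (show k < Nat.find hex by omega)
    push_neg at this
    simpa [hk] using this

lemma dyadic {κ : Measure E} {f : E → ℝ≥0∞} {r C q : ℝ} (hr : 0 < r) (_hC : 0 ≤ C)
    (hq0 : 0 ≤ q) (hq1 : q < 1)
    (h : ∀ n : ℕ, ∫⁻ y in {y : E | r * 2 ^ n < ‖y‖ ∧ ‖y‖ ≤ r * 2 ^ (n + 1)}, f y ∂κ
      ≤ ENNReal.ofReal (C * q ^ n)) :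
    ∫⁻ y in {y : E | r < ‖y‖}, f y ∂κ ≤ ENNReal.ofReal (C * (1 - q)⁻¹) := by
  calc ∫⁻ y in {y : E | r < ‖y‖}, f y ∂κ
      ≤ ∫⁻ y in ⋃ n : ℕ, {y : E | r * 2 ^ n < ‖y‖ ∧ ‖y‖ ≤ r * 2 ^ (n + 1)}, f y ∂κ :=
        lintegral_mono_set (cover hr)
    _ ≤ ∑' n : ℕ, ∫⁻ y in {y : E | r * 2 ^ n < ‖y‖ ∧ ‖y‖ ≤ r * 2 ^ (n + 1)}, f y ∂κ :=
        lintegral_iUnion_le _ _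
    _ ≤ ∑' n : ℕ, ENNReal.ofReal (C * q ^ n) := ENNReal.tsum_le_tsum h
    _ = ENNReal.ofReal (∑' n : ℕ, C * q ^ n) :=
        (ENNReal.ofReal_tsum_of_nonneg (fun n => by positivity)
          ((summable_geometric_of_lt_one hq0 hq1).mul_left C)).symm
    _ = ENNReal.ofReal (C * (1 - q)⁻¹) := by
        rw [tsum_mul_left, tsum_geometric_of_lt_one hq0 hq1]

end Stmt5Aux

set_option maxHeartbeats 1000000 in
/-- For `μ = ν + |y|^{-d-σ} dy`, the normalized truncated symbol satisfies
`(1/μ(B_r^c)) |∫_{|y|>r} (1 - e^{i ξ·y}) μ(dy)| ≤ N r^{σ/2} |ξ|^{σ/2}`. -/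
theorem stmt_5 (d : ℕ) (hd : 0 < d) (ν : Measure (EuclideanSpace ℝ (Fin d)))
    (σ Λ : ℝ) (hσ : σ ∈ Set.Ioo (0:ℝ) 2) (hΛ : 1 ≤ Λ)
    (hν : ∀ r : ℝ, 0 < r → ν {y | r < ‖y‖} ≤ ENNReal.ofReal (Λ * r ^ (-σ))) :
    ∃ N : ℝ, 0 < N ∧ ∀ r : ℝ, 0 < r → ∀ ξ : EuclideanSpace ℝ (Fin d),
      (let μ : Measure (EuclideanSpace ℝ (Fin d)) :=
        ν + volume.withDensity (fun y => ENNReal.ofReal (‖y‖ ^ (-(d:ℝ) - σ)))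
      ‖∫ y in {y | r < ‖y‖}, (1 - Complex.exp (Complex.I * (⟪ξ, y⟫_ℝ : ℂ))) ∂μ‖
        ≤ N * r ^ (σ / 2) * ‖ξ‖ ^ (σ / 2) * (μ {y | r < ‖y‖}).toReal) := by
  obtain ⟨hσ0, hσ2⟩ := hσ
  haveI : Nontrivial (EuclideanSpace ℝ (Fin d)) := by
    rw [← Module.finrank_pos_iff (R := ℝ)]
    simpa [finrank_euclideanSpace_fin] using hd
  have hd' : Module.finrank ℝ (EuclideanSpace ℝ (Fin d)) = d := finrank_euclideanSpace_fin
  have hΛ0 : (0:ℝ) < Λ := lt_of_lt_of_le one_pos hΛ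
  set V : ℝ := (volume (ball (0 : EuclideanSpace ℝ (Fin d)) 1)).toReal with hVdef
  have hVball_ne : volume (ball (0 : EuclideanSpace ℝ (Fin d)) 1) ≠ ⊤ := measure_ball_lt_top.ne
  have hV0 : 0 < V := ENNReal.toReal_pos (measure_ball_pos _ _ one_pos).ne' hVball_ne
  have hVeq : ENNReal.ofReal V = volume (ball (0 : EuclideanSpace ℝ (Fin d)) 1) :=
    ENNReal.ofReal_toReal hVball_ne
  set q : ℝ := 2 ^ (-(σ / 2)) with hqdef
  have hq0 : 0 < q := Real.rpow_pos_of_pos two_pos _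
  have hq1 : q < 1 := Real.rpow_lt_one_of_one_lt_of_neg one_lt_two (by linarith)
  have h2σ : (0:ℝ) < 2 ^ (σ / 2) := Real.rpow_pos_of_pos two_pos _
  have h2dσ : (0:ℝ) < 2 ^ ((d:ℝ) + σ / 2) := Real.rpow_pos_of_pos two_pos _
  set K : ℝ := (Λ * 2 ^ (σ / 2) + 2 ^ ((d:ℝ) + σ / 2) * V) * (1 - q)⁻¹ with hKdef
  have hK0 : 0 < K := by
    apply mul_pos
    · nlinarith
    · exact inv_pos.2 (by linarith)
  set c : ℝ := 2 ^ (-(d:ℝ) - σ) * ((2:ℝ) ^ d - 1) with hcdef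
  have hc0 : 0 < c := by
    apply mul_pos (Real.rpow_pos_of_pos two_pos _)
    have h1 : (2:ℝ) ^ 1 ≤ (2:ℝ) ^ d := pow_le_pow_right₀ one_le_two hd
    simp only [pow_one] at h1
    linarith
  have h1q : (0:ℝ) < 1 - q := by linarith
  have hN0 : (0:ℝ) < 2 * K / (c * V) := div_pos (by linarith) (mul_pos hc0 hV0)
  refine ⟨2 * K / (c * V), hN0, ?_⟩
  intro r hr ξ
  intro μ
  set ρ : EuclideanSpace ℝ (Fin d) → ℝ≥0∞ :=
    fun y => ENNReal.ofReal (‖y‖ ^ (-(d:ℝ) - σ)) with hρdef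
  have hμ : μ = ν + volume.withDensity ρ := rfl
  have hexp_ne : -(d:ℝ) - σ ≠ 0 := by
    have : (0:ℝ) ≤ (d:ℝ) := Nat.cast_nonneg d
    nlinarith
  have hρm : Measurable ρ := by
    have heq : ρ = fun y => Set.indicator ({0}ᶜ : Set (EuclideanSpace ℝ (Fin d)))
        (fun y => ENNReal.ofReal (Real.exp (Real.log ‖y‖ * (-(d:ℝ) - σ)))) y := by
      funext y
      by_cases hy : y = 0
      · subst hy
        simp [hρdef, Real.zero_rpow hexp_ne]
      · have hn : 0 < ‖y‖ := norm_pos_iff.mpr hy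
        simp only [hρdef]
        rw [Set.indicator_of_mem (by simpa using hy), Real.rpow_def_of_pos hn]
    rw [heq]
    exact Measurable.indicator
      ((measurable_norm.log.mul_const _).exp.ennreal_ofReal)
      (measurableSet_singleton (0 : EuclideanSpace ℝ (Fin d))).compl
  set S : Set (EuclideanSpace ℝ (Fin d)) := {y | r < ‖y‖} with hSdef
  have hSm : MeasurableSet S := measurableSet_lt measurable_const measurable_norm
  set f : EuclideanSpace ℝ (Fin d) → ℝ≥0∞ :=
    fun y => ENNReal.ofReal (‖y‖ ^ (σ / 2)) with hfdef
  have hfm : Measurable f :=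
    ((continuous_norm.rpow_const (fun _ => Or.inr (by positivity))).measurable).ennreal_ofReal
  -- basic rpow algebra
  have e1 : ∀ (e : ℝ) (m : ℕ), (r * 2 ^ m : ℝ) ^ e = r ^ e * ((2:ℝ) ^ e) ^ m := by
    intro e m
    rw [Real.mul_rpow hr.le (by positivity), ← Real.rpow_natCast (2:ℝ) m,
      ← Real.rpow_mul two_pos.le, ← Real.rpow_natCast ((2:ℝ) ^ e) m,
      ← Real.rpow_mul two_pos.le]
    ring_nf
  -- ν annulus bound
  have hν_ann : ∀ n : ℕ,
      ∫⁻ y in {y : EuclideanSpace ℝ (Fin d) | r * 2 ^ n < ‖y‖ ∧ ‖y‖ ≤ r * 2 ^ (n + 1)}, f y ∂ν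
        ≤ ENNReal.ofReal ((Λ * 2 ^ (σ / 2) * r ^ (-(σ / 2))) * q ^ n) := by
    intro n
    have hrn : (0:ℝ) < r * 2 ^ n := by positivity
    calc ∫⁻ y in {y : EuclideanSpace ℝ (Fin d) | r * 2 ^ n < ‖y‖ ∧ ‖y‖ ≤ r * 2 ^ (n + 1)}, f y ∂ν
        ≤ ∫⁻ _ in {y : EuclideanSpace ℝ (Fin d) | r * 2 ^ n < ‖y‖ ∧ ‖y‖ ≤ r * 2 ^ (n + 1)},
            ENNReal.ofReal ((r * 2 ^ (n + 1)) ^ (σ / 2)) ∂ν := by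
          refine setLIntegral_mono measurable_const fun y hy => ?_
          exact ENNReal.ofReal_le_ofReal
            (Real.rpow_le_rpow (norm_nonneg _) hy.2 (by linarith))
      _ = ENNReal.ofReal ((r * 2 ^ (n + 1)) ^ (σ / 2))
            * ν {y : EuclideanSpace ℝ (Fin d) | r * 2 ^ n < ‖y‖ ∧ ‖y‖ ≤ r * 2 ^ (n + 1)} :=
          setLIntegral_const _ _
      _ ≤ ENNReal.ofReal ((r * 2 ^ (n + 1)) ^ (σ / 2))
            * ENNReal.ofReal (Λ * (r * 2 ^ n) ^ (-σ)) := by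
          refine mul_le_mul_right (le_trans (measure_mono fun y hy => hy.1) (hν _ hrn)) _
      _ = ENNReal.ofReal ((r * 2 ^ (n + 1)) ^ (σ / 2) * (Λ * (r * 2 ^ n) ^ (-σ))) :=
          (ENNReal.ofReal_mul (by positivity)).symm
      _ = ENNReal.ofReal ((Λ * 2 ^ (σ / 2) * r ^ (-(σ / 2))) * q ^ n) := by
          congr 1
          rw [e1 (σ / 2) (n + 1), e1 (-σ) n]
          have h2 : ((2:ℝ) ^ (σ / 2)) * ((2:ℝ) ^ (-σ)) = q := by
            rw [← Real.rpow_add two_pos, hqdef]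
            congr 1; ring
          have hr2 : r ^ (σ / 2) * r ^ (-σ) = r ^ (-(σ / 2)) := by
            rw [← Real.rpow_add hr]
            congr 1; ring
          calc r ^ (σ / 2) * ((2:ℝ) ^ (σ / 2)) ^ (n + 1) * (Λ * (r ^ (-σ) * ((2:ℝ) ^ (-σ)) ^ n))
              = (r ^ (σ / 2) * r ^ (-σ)) * Λ * (2:ℝ) ^ (σ / 2)
                  * ((2:ℝ) ^ (σ / 2) * (2:ℝ) ^ (-σ)) ^ n := by ring
            _ = (Λ * 2 ^ (σ / 2) * r ^ (-(σ / 2))) * q ^ n := by rw [hr2, h2]; ring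
  -- density annulus bound
  have hμ2_ann : ∀ n : ℕ,
      ∫⁻ y in {y : EuclideanSpace ℝ (Fin d) | r * 2 ^ n < ‖y‖ ∧ ‖y‖ ≤ r * 2 ^ (n + 1)}, f y
          ∂(volume.withDensity ρ)
        ≤ ENNReal.ofReal ((2 ^ ((d:ℝ) + σ / 2) * V * r ^ (-(σ / 2))) * q ^ n) := by
    intro n
    have hrn : (0:ℝ) < r * 2 ^ n := by positivity
    have hrn1 : (0:ℝ) < r * 2 ^ (n + 1) := by positivity
    have hAm : MeasurableSet
        {y : EuclideanSpace ℝ (Fin d) | r * 2 ^ n < ‖y‖ ∧ ‖y‖ ≤ r * 2 ^ (n + 1)} :=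
      (measurableSet_lt measurable_const measurable_norm).inter
        (measurableSet_le measurable_norm measurable_const)
    rw [setLIntegral_withDensity_eq_setLIntegral_mul volume hρm hfm hAm]
    calc ∫⁻ y in {y : EuclideanSpace ℝ (Fin d) | r * 2 ^ n < ‖y‖ ∧ ‖y‖ ≤ r * 2 ^ (n + 1)},
            (ρ * f) y ∂volume
        ≤ ∫⁻ _ in {y : EuclideanSpace ℝ (Fin d) | r * 2 ^ n < ‖y‖ ∧ ‖y‖ ≤ r * 2 ^ (n + 1)},
            ENNReal.ofReal ((r * 2 ^ n) ^ (-(d:ℝ) - σ) * (r * 2 ^ (n + 1)) ^ (σ / 2))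
            ∂volume := by
          refine setLIntegral_mono measurable_const fun y hy => ?_
          have h1 : ‖y‖ ^ (-(d:ℝ) - σ) ≤ (r * 2 ^ n) ^ (-(d:ℝ) - σ) :=
            Real.rpow_le_rpow_of_nonpos hrn hy.1.le
              (by push_cast; nlinarith [Nat.cast_nonneg (α := ℝ) d])
          have h2 : ‖y‖ ^ (σ / 2) ≤ (r * 2 ^ (n + 1)) ^ (σ / 2) :=
            Real.rpow_le_rpow (norm_nonneg _) hy.2 (by linarith)
          simp only [Pi.mul_apply, hρdef, hfdef]
          rw [← ENNReal.ofReal_mul (by positivity)]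
          exact ENNReal.ofReal_le_ofReal
            (mul_le_mul h1 h2 (Real.rpow_nonneg (norm_nonneg _) _) (by positivity))
      _ = ENNReal.ofReal ((r * 2 ^ n) ^ (-(d:ℝ) - σ) * (r * 2 ^ (n + 1)) ^ (σ / 2))
            * volume {y : EuclideanSpace ℝ (Fin d) | r * 2 ^ n < ‖y‖ ∧ ‖y‖ ≤ r * 2 ^ (n + 1)} :=
          setLIntegral_const _ _
      _ ≤ ENNReal.ofReal ((r * 2 ^ n) ^ (-(d:ℝ) - σ) * (r * 2 ^ (n + 1)) ^ (σ / 2))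
            * (ENNReal.ofReal ((r * 2 ^ (n + 1)) ^ d)
                * volume (ball (0 : EuclideanSpace ℝ (Fin d)) 1)) := by
          refine mul_le_mul_right ?_ _
          calc volume {y : EuclideanSpace ℝ (Fin d) | r * 2 ^ n < ‖y‖ ∧ ‖y‖ ≤ r * 2 ^ (n + 1)}
              ≤ volume (closedBall (0 : EuclideanSpace ℝ (Fin d)) (r * 2 ^ (n + 1))) :=
                measure_mono fun y hy => mem_closedBall_zero_iff.2 hy.2
            _ = ENNReal.ofReal ((r * 2 ^ (n + 1)) ^ d)
                  * volume (ball (0 : EuclideanSpace ℝ (Fin d)) 1) := by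
                rw [Measure.addHaar_closedBall _ _ hrn1.le, hd']
      _ = ENNReal.ofReal ((2 ^ ((d:ℝ) + σ / 2) * V * r ^ (-(σ / 2))) * q ^ n) := by
          rw [← hVeq, ← ENNReal.ofReal_mul (by positivity),
            ← ENNReal.ofReal_mul (by positivity)]
          congr 1
          rw [← Real.rpow_natCast (r * 2 ^ (n + 1)) d, e1 (-(d:ℝ) - σ) n, e1 (σ / 2) (n + 1),
            e1 ((d:ℝ)) (n + 1)]
          have hr3 : r ^ (-(d:ℝ) - σ) * r ^ (σ / 2) * r ^ ((d:ℝ)) = r ^ (-(σ / 2)) := by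
            rw [← Real.rpow_add hr, ← Real.rpow_add hr]
            congr 1; ring
          have hq2 : (2:ℝ) ^ (-(d:ℝ) - σ) * 2 ^ (σ / 2) * 2 ^ ((d:ℝ)) = q := by
            rw [← Real.rpow_add two_pos, ← Real.rpow_add two_pos, hqdef]
            congr 1; ring
          have hq3 : (2:ℝ) ^ (σ / 2) * (2:ℝ) ^ ((d:ℝ)) = 2 ^ ((d:ℝ) + σ / 2) := by
            rw [← Real.rpow_add two_pos]
            congr 1; ring
          calc (r ^ (-(d:ℝ) - σ) * ((2:ℝ) ^ (-(d:ℝ) - σ)) ^ n)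
                * (r ^ (σ / 2) * ((2:ℝ) ^ (σ / 2)) ^ (n + 1))
                * ((r ^ ((d:ℝ)) * ((2:ℝ) ^ ((d:ℝ))) ^ (n + 1)) * V)
              = ((r ^ (-(d:ℝ) - σ) * r ^ (σ / 2) * r ^ ((d:ℝ))) * V)
                  * (((2:ℝ) ^ (-(d:ℝ) - σ) * 2 ^ (σ / 2) * 2 ^ ((d:ℝ))) ^ n)
                  * ((2:ℝ) ^ (σ / 2) * (2:ℝ) ^ ((d:ℝ))) := by ring
            _ = (2 ^ ((d:ℝ) + σ / 2) * V * r ^ (-(σ / 2))) * q ^ n := by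
                rw [hr3, hq2, hq3]; ring
  -- total tail moment bound
  have hJ : ∫⁻ y in S, f y ∂μ ≤ ENNReal.ofReal (K * r ^ (-(σ / 2))) := by
    rw [hμ, Measure.restrict_add, lintegral_add_measure]
    have hJν := Stmt5Aux.dyadic hr (by positivity) hq0.le hq1 hν_ann
    have hJ2 := Stmt5Aux.dyadic hr (by positivity) hq0.le hq1 hμ2_ann
    refine le_trans (add_le_add hJν hJ2) ?_
    rw [← ENNReal.ofReal_add (by positivity) (by positivity)]
    apply ENNReal.ofReal_le_ofReal
    rw [hKdef]
    apply le_of_eq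
    ring
  -- pointwise bound on the integrand
  have hpoint : ∀ y : EuclideanSpace ℝ (Fin d),
      ENNReal.ofReal ‖1 - Complex.exp (Complex.I * (⟪ξ, y⟫_ℝ : ℂ))‖
        ≤ ENNReal.ofReal (2 * ‖ξ‖ ^ (σ / 2)) * f y := by
    intro y
    simp only [hfdef]
    rw [← ENNReal.ofReal_mul (by positivity)]
    apply ENNReal.ofReal_le_ofReal
    calc ‖1 - Complex.exp (Complex.I * (⟪ξ, y⟫_ℝ : ℂ))‖
        ≤ 2 * |⟪ξ, y⟫_ℝ| ^ (σ / 2) := Stmt5Aux.exp_bound hσ0 hσ2 _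
      _ ≤ 2 * (‖ξ‖ * ‖y‖) ^ (σ / 2) := by
          have h' : |⟪ξ, y⟫_ℝ| ^ (σ / 2) ≤ (‖ξ‖ * ‖y‖) ^ (σ / 2) :=
            Real.rpow_le_rpow (abs_nonneg _) (abs_real_inner_le_norm ξ y) (by linarith)
          linarith
      _ = 2 * ‖ξ‖ ^ (σ / 2) * ‖y‖ ^ (σ / 2) := by
          rw [Real.mul_rpow (norm_nonneg _) (norm_nonneg _)]; ring
  -- upper bound for the integral
  have hupper : ‖∫ y in S, (1 - Complex.exp (Complex.I * (⟪ξ, y⟫_ℝ : ℂ))) ∂μ‖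
      ≤ 2 * ‖ξ‖ ^ (σ / 2) * (K * r ^ (-(σ / 2))) := by
    refine (norm_integral_le_lintegral_norm _).trans ?_
    have hle : ∫⁻ y in S, ENNReal.ofReal ‖1 - Complex.exp (Complex.I * (⟪ξ, y⟫_ℝ : ℂ))‖ ∂μ
        ≤ ENNReal.ofReal (2 * ‖ξ‖ ^ (σ / 2) * (K * r ^ (-(σ / 2)))) := by
      calc ∫⁻ y in S, ENNReal.ofReal ‖1 - Complex.exp (Complex.I * (⟪ξ, y⟫_ℝ : ℂ))‖ ∂μ
          ≤ ∫⁻ y in S, ENNReal.ofReal (2 * ‖ξ‖ ^ (σ / 2)) * f y ∂μ :=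
            lintegral_mono fun y => hpoint y
        _ = ENNReal.ofReal (2 * ‖ξ‖ ^ (σ / 2)) * ∫⁻ y in S, f y ∂μ :=
            lintegral_const_mul' _ _ ENNReal.ofReal_ne_top
        _ ≤ ENNReal.ofReal (2 * ‖ξ‖ ^ (σ / 2)) * ENNReal.ofReal (K * r ^ (-(σ / 2))) :=
            mul_le_mul_right hJ _
        _ = ENNReal.ofReal (2 * ‖ξ‖ ^ (σ / 2) * (K * r ^ (-(σ / 2)))) :=
            (ENNReal.ofReal_mul (by positivity)).symm
    exact le_trans (ENNReal.toReal_mono ENNReal.ofReal_ne_top hle)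
      (le_of_eq (ENNReal.toReal_ofReal (by positivity)))
  -- finiteness of μ S
  have hfin : μ S ≠ ⊤ := by
    intro htop
    have h1 : ENNReal.ofReal (r ^ (σ / 2)) * μ S ≤ ENNReal.ofReal (K * r ^ (-(σ / 2))) := by
      refine le_trans ?_ hJ
      rw [← setLIntegral_const S (ENNReal.ofReal (r ^ (σ / 2)))]
      refine setLIntegral_mono hfm fun y hy => ?_
      exact ENNReal.ofReal_le_ofReal (Real.rpow_le_rpow hr.le (le_of_lt hy) (by linarith))
    rw [htop, ENNReal.mul_top (by
      rw [Ne, ENNReal.ofReal_eq_zero, not_le]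
      exact Real.rpow_pos_of_pos hr _)] at h1
    exact ENNReal.ofReal_ne_top (top_le_iff.mp h1)
  -- lower bound for μ S
  have hlow_e : ENNReal.ofReal (c * V * r ^ (-σ)) ≤ μ S := by
    have hD : (ball (0 : EuclideanSpace ℝ (Fin d)) (2 * r)
        \ closedBall (0 : EuclideanSpace ℝ (Fin d)) r) ⊆ S := by
      intro y hy
      have h2 := hy.2
      simp only [mem_closedBall_zero_iff, not_le] at h2
      exact h2
    have step1 : ENNReal.ofReal ((2 * r) ^ (-(d:ℝ) - σ))
        * volume (ball (0 : EuclideanSpace ℝ (Fin d)) (2 * r)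
            \ closedBall (0 : EuclideanSpace ℝ (Fin d)) r) ≤ μ S := by
      rw [hμ]
      have hwd : ENNReal.ofReal ((2 * r) ^ (-(d:ℝ) - σ))
          * volume (ball (0 : EuclideanSpace ℝ (Fin d)) (2 * r)
              \ closedBall (0 : EuclideanSpace ℝ (Fin d)) r)
          ≤ (volume.withDensity ρ) S := by
        rw [withDensity_apply _ hSm]
        calc ENNReal.ofReal ((2 * r) ^ (-(d:ℝ) - σ))
            * volume (ball (0 : EuclideanSpace ℝ (Fin d)) (2 * r)
                \ closedBall (0 : EuclideanSpace ℝ (Fin d)) r)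
            = ∫⁻ _ in (ball (0 : EuclideanSpace ℝ (Fin d)) (2 * r)
                \ closedBall (0 : EuclideanSpace ℝ (Fin d)) r),
                ENNReal.ofReal ((2 * r) ^ (-(d:ℝ) - σ)) ∂volume :=
              (setLIntegral_const _ _).symm
          _ ≤ ∫⁻ y in (ball (0 : EuclideanSpace ℝ (Fin d)) (2 * r)
                \ closedBall (0 : EuclideanSpace ℝ (Fin d)) r), ρ y ∂volume := by
              refine setLIntegral_mono hρm fun y hy => ?_
              have hy1 : r < ‖y‖ := hD hy
              have hy2 : ‖y‖ ≤ 2 * r := le_of_lt (mem_ball_zero_iff.1 hy.1)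
              exact ENNReal.ofReal_le_ofReal
                (Real.rpow_le_rpow_of_nonpos (lt_trans hr hy1) hy2
                  (by push_cast; nlinarith [Nat.cast_nonneg (α := ℝ) d]))
          _ ≤ ∫⁻ y in S, ρ y ∂volume := lintegral_mono_set hD
      calc ENNReal.ofReal ((2 * r) ^ (-(d:ℝ) - σ))
          * volume (ball (0 : EuclideanSpace ℝ (Fin d)) (2 * r)
              \ closedBall (0 : EuclideanSpace ℝ (Fin d)) r)
          ≤ (volume.withDensity ρ) S := hwd
        _ ≤ ν S + (volume.withDensity ρ) S := le_add_self
        _ = (ν + volume.withDensity ρ) S := (Measure.add_apply _ _ _).symm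
    have step2 : ENNReal.ofReal ((2 * r) ^ d - r ^ d)
        * volume (ball (0 : EuclideanSpace ℝ (Fin d)) 1)
        ≤ volume (ball (0 : EuclideanSpace ℝ (Fin d)) (2 * r)
            \ closedBall (0 : EuclideanSpace ℝ (Fin d)) r) := by
      have h2r : (0:ℝ) ≤ 2 * r := by linarith
      calc ENNReal.ofReal ((2 * r) ^ d - r ^ d)
          * volume (ball (0 : EuclideanSpace ℝ (Fin d)) 1)
          = (ENNReal.ofReal ((2 * r) ^ d) - ENNReal.ofReal (r ^ d))
              * volume (ball (0 : EuclideanSpace ℝ (Fin d)) 1) := by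
            rw [ENNReal.ofReal_sub _ (by positivity)]
        _ = ENNReal.ofReal ((2 * r) ^ d) * volume (ball (0 : EuclideanSpace ℝ (Fin d)) 1)
              - ENNReal.ofReal (r ^ d) * volume (ball (0 : EuclideanSpace ℝ (Fin d)) 1) :=
            ENNReal.sub_mul (fun _ _ => hVball_ne)
        _ = volume (ball (0 : EuclideanSpace ℝ (Fin d)) (2 * r))
              - volume (closedBall (0 : EuclideanSpace ℝ (Fin d)) r) := by
            rw [Measure.addHaar_ball _ _ h2r, Measure.addHaar_closedBall _ _ hr.le, hd']
        _ ≤ volume (ball (0 : EuclideanSpace ℝ (Fin d)) (2 * r)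
              \ closedBall (0 : EuclideanSpace ℝ (Fin d)) r) := le_measure_diff
    have hpowd : (0:ℝ) ≤ (2 * r) ^ d - r ^ d := by
      have hle : r ^ d ≤ (2 * r) ^ d := pow_le_pow_left₀ hr.le (by linarith) d
      linarith
    have h2rp : (0:ℝ) ≤ (2 * r) ^ (-(d:ℝ) - σ) := Real.rpow_nonneg (by linarith) _
    calc ENNReal.ofReal (c * V * r ^ (-σ))
        = ENNReal.ofReal ((2 * r) ^ (-(d:ℝ) - σ))
            * (ENNReal.ofReal ((2 * r) ^ d - r ^ d)
                * volume (ball (0 : EuclideanSpace ℝ (Fin d)) 1)) := by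
          rw [← hVeq, ← ENNReal.ofReal_mul hpowd,
            ← ENNReal.ofReal_mul h2rp]
          congr 1
          rw [hcdef, Real.mul_rpow two_pos.le hr.le, mul_pow]
          have h1 : (r:ℝ) ^ d = r ^ ((d:ℝ)) := (Real.rpow_natCast r d).symm
          have h2 : r ^ (-(d:ℝ) - σ) * r ^ ((d:ℝ)) = r ^ (-σ) := by
            rw [← Real.rpow_add hr]
            congr 1; ring
          calc 2 ^ (-(d:ℝ) - σ) * ((2:ℝ) ^ d - 1) * V * r ^ (-σ)
              = 2 ^ (-(d:ℝ) - σ) * ((2:ℝ) ^ d - 1) * V * (r ^ (-(d:ℝ) - σ) * r ^ ((d:ℝ))) := by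
                rw [h2]
            _ = 2 ^ (-(d:ℝ) - σ) * r ^ (-(d:ℝ) - σ) * (((2:ℝ) ^ d * r ^ ((d:ℝ))
                  - r ^ ((d:ℝ))) * V) := by ring
            _ = 2 ^ (-(d:ℝ) - σ) * r ^ (-(d:ℝ) - σ) * (((2:ℝ) ^ d * r ^ d - r ^ d) * V) := by
                rw [← h1]
      _ ≤ ENNReal.ofReal ((2 * r) ^ (-(d:ℝ) - σ))
            * volume (ball (0 : EuclideanSpace ℝ (Fin d)) (2 * r)
                \ closedBall (0 : EuclideanSpace ℝ (Fin d)) r) := mul_le_mul_right step2 _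
      _ ≤ μ S := step1
  have hlow : c * V * r ^ (-σ) ≤ (μ S).toReal := by
    have h := ENNReal.toReal_mono hfin hlow_e
    rwa [ENNReal.toReal_ofReal (by positivity)] at h
  -- conclusion
  refine hupper.trans ?_
  have hrs : r ^ (σ / 2) * r ^ (-σ) = r ^ (-(σ / 2)) := by
    rw [← Real.rpow_add hr]
    congr 1; ring
  have hcV : c * V ≠ 0 := (mul_pos hc0 hV0).ne'
  have hdiv : 2 * K / (c * V) * (c * V) = 2 * K := div_mul_cancel₀ _ hcV
  have key : 2 * ‖ξ‖ ^ (σ / 2) * (K * r ^ (-(σ / 2)))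
      = (2 * K / (c * V)) * r ^ (σ / 2) * ‖ξ‖ ^ (σ / 2) * (c * V * r ^ (-σ)) := by
    calc 2 * ‖ξ‖ ^ (σ / 2) * (K * r ^ (-(σ / 2)))
        = 2 * ‖ξ‖ ^ (σ / 2) * (K * (r ^ (σ / 2) * r ^ (-σ))) := by rw [hrs]
      _ = (2 * K / (c * V) * (c * V)) * ‖ξ‖ ^ (σ / 2) * (r ^ (σ / 2) * r ^ (-σ)) := by
          rw [hdiv]; ring
      _ = (2 * K / (c * V)) * r ^ (σ / 2) * ‖ξ‖ ^ (σ / 2) * (c * V * r ^ (-σ)) := by ring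
  rw [key]
  have hN1 : (0:ℝ) ≤ 2 * K / (c * V) * r ^ (σ / 2) * ‖ξ‖ ^ (σ / 2) :=
    mul_nonneg (mul_nonneg hN0.le (Real.rpow_nonneg hr.le _))
      (Real.rpow_nonneg (norm_nonneg _) _)
  exact mul_le_mul_of_nonneg_left hlow hN1
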